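/- For every real θ with sin(2θ) ≠ 0 and every positive integer m, the average success probability over a uniformly random number of Grover rotations j ∈ {0, 1, …, m−1} satisfies (1/m) ∑_{j=0}^{m−1} sin²((2j+1)θ) = 1/2 − sin(4mθ)/(4m · sin(2θ)). -/

import Mathlib

open Real

lemma grover_sum_aux (θ : ℝ) (hθ : Real.sin (2 * θ) ≠ 0) (m : ℕ) :
    ∑ j ∈ Finset.range m, Real.sin ((2 * j + 1) * θ) ^ 2 =
      m / 2 - Real.sin (4 * m * θ) / (4 * Real.sin (2 * θ)) := by
  induction m with
  | zero => simp
  | succ n ih =>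
      rw [Finset.sum_range_succ, ih]
      have key : Real.sin (4 * (n + 1) * θ) - Real.sin (4 * n * θ)
          = 2 * Real.cos ((4 * n + 2) * θ) * Real.sin (2 * θ) := by
        have h1 : (4 * (n + 1) * θ : ℝ) = (4 * n + 2) * θ + 2 * θ := by ring
        have h2 : (4 * n * θ : ℝ) = (4 * n + 2) * θ - 2 * θ := by ring
        rw [h1, h2, Real.sin_add, Real.sin_sub]; ring
      have hcos : Real.cos ((4 * n + 2) * θ) = 1 - 2 * Real.sin ((2 * n + 1) * θ) ^ 2 := by
        have h : ((4 * n + 2) * θ : ℝ) = 2 * ((2 * n + 1) * θ) := by ring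
        rw [h, Real.cos_two_mul', Real.cos_sq']; ring
      push_cast
      rw [hcos] at key
      field_simp
      ring_nf at key ⊢
      nlinarith [key]

theorem average_grover_success_probability
    (θ : ℝ) (hθ : Real.sin (2 * θ) ≠ 0) (m : ℕ) (hm : 0 < m) :
    (1 / m : ℝ) * ∑ j ∈ Finset.range m, Real.sin ((2 * j + 1) * θ) ^ 2 =
      1 / 2 - Real.sin (4 * m * θ) / (4 * m * Real.sin (2 * θ)) := by
  rw [grover_sum_aux θ hθ m]
  have hm' : (m : ℝ) ≠ 0 := Nat.cast_ne_zero.mpr hm.ne'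
  field_simp
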